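/- Under the heat-matrix assumptions with zero sources, if u⁰_j ≥ 0 for every j, then for every k ≥ 1 and every index i one has CN_k(h)_i ≥ 0, and for every k ≥ 2 one has LN_k(h)_i ≥ 0; i.e., the constant-neighbour and linear-neighbour methods preserve positivity for every step size h > 0 in the absence of heat sinks. -/

import Mathlib

open Finset NormedSpace Asymptotics

/-- `aCoef M Q v i = Σ_{j≠i} M_ij v_j + Q_i`. -/
noncomputable def aCoef {N : ℕ} (M : Matrix (Fin N) (Fin N) ℝ) (Q : Fin N → ℝ)
    (v : Fin N → ℝ) (i : Fin N) : ℝ :=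
  (∑ j ∈ Finset.univ.erase i, M i j * v j) + Q i

/-- The constant-neighbour step `F_h`. -/
noncomputable def cnStep {N : ℕ} (M : Matrix (Fin N) (Fin N) ℝ) (Q u0 : Fin N → ℝ)
    (h : ℝ) (v : Fin N → ℝ) : Fin N → ℝ :=
  fun i => u0 i * Real.exp (M i i * h)
    + (aCoef M Q v i / (-(M i i))) * (1 - Real.exp (M i i * h))

/-- The `k`-stage constant-neighbour approximation `CN_k(h) = F_h^[k] u⁰`. -/
noncomputable def CN {N : ℕ} (M : Matrix (Fin N) (Fin N) ℝ) (Q u0 : Fin N → ℝ)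
    (k : ℕ) (h : ℝ) : Fin N → ℝ :=
  (cnStep M Q u0 h)^[k] u0

/-- The effective slope `s_i(v) = (a_i(v) − a_i(u⁰))/h`. -/
noncomputable def sCoef {N : ℕ} (M : Matrix (Fin N) (Fin N) ℝ) (Q u0 : Fin N → ℝ)
    (h : ℝ) (v : Fin N → ℝ) (i : Fin N) : ℝ :=
  (aCoef M Q v i - aCoef M Q u0 i) / h

/-- The linear-neighbour step `G_h`, with `τ_i = −1/M_ii`. -/
noncomputable def lnStep {N : ℕ} (M : Matrix (Fin N) (Fin N) ℝ) (Q u0 : Fin N → ℝ)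
    (h : ℝ) (v : Fin N → ℝ) : Fin N → ℝ :=
  fun i =>
    u0 i * Real.exp (M i i * h)
      + (aCoef M Q u0 i * (-(M i i)⁻¹) - sCoef M Q u0 h v i * (-(M i i)⁻¹) ^ 2)
          * (1 - Real.exp (M i i * h))
      + sCoef M Q u0 h v i * (-(M i i)⁻¹) * h

/-- The `k`-stage linear-neighbour approximation `LN_k(h) = G_h^[k−1] (CN_1(h))`, `k ≥ 2`. -/
noncomputable def LN {N : ℕ} (M : Matrix (Fin N) (Fin N) ℝ) (Q u0 : Fin N → ℝ)
    (k : ℕ) (h : ℝ) : Fin N → ℝ :=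
  (lnStep M Q u0 h)^[k - 1] (cnStep M Q u0 h u0)

/-- The exact solution `u_ex(h) = e^{hM} u⁰ + ∫₀^h e^{(h−s)M} Q ds`. -/
noncomputable def uex {N : ℕ} (M : Matrix (Fin N) (Fin N) ℝ) (Q u0 : Fin N → ℝ)
    (h : ℝ) : Fin N → ℝ :=
  (NormedSpace.exp (h • M)).mulVec u0 + ∫ s in (0:ℝ)..h, (NormedSpace.exp ((h - s) • M)).mulVec Q

lemma ln_alg (m h u0i a0 av : ℝ) (hm : m < 0) (hh : 0 < h) (hu : 0 ≤ u0i)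
    (ha0 : 0 ≤ a0) (hav : 0 ≤ av) :
    0 ≤ u0i * Real.exp (m * h)
      + (a0 * (-m⁻¹) - ((av - a0) / h) * (-m⁻¹) ^ 2) * (1 - Real.exp (m * h))
      + ((av - a0) / h) * (-m⁻¹) * h := by
  set τ : ℝ := -m⁻¹ with hτdef
  have hτ : 0 < τ := by rw [hτdef]; exact neg_pos.mpr (inv_lt_zero.mpr hm)
  have hmτ : m * τ = -1 := by
    rw [hτdef, mul_neg, mul_inv_cancel₀ hm.ne]
  set e : ℝ := Real.exp (m * h) with hedef
  have he0 : 0 < e := Real.exp_pos _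
  have he1 : e < 1 := Real.exp_lt_one_iff.mpr (mul_neg_of_neg_of_pos hm hh)
  have hle : m * h + 1 ≤ e := Real.add_one_le_exp (m * h)
  have hkey : e * (h + τ) ≤ τ := by
    have h2 : (-(m*h)) + 1 ≤ Real.exp (-(m*h)) := Real.add_one_le_exp _
    have h3 : Real.exp (-(m*h)) = e⁻¹ := by rw [hedef, Real.exp_neg]
    have h4 : e * ((-(m*h)) + 1) ≤ 1 := by
      rw [h3] at h2
      calc e * ((-(m*h)) + 1) ≤ e * e⁻¹ := by nlinarith
        _ = 1 := mul_inv_cancel₀ he0.ne'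
    nlinarith [mul_le_mul_of_nonneg_left h4 hτ.le]
  have hc : 0 ≤ h - τ * (1 - e) := by nlinarith
  set S : ℝ := (av - a0) / h with hSdef
  have hS : S * h = av - a0 := div_mul_cancel₀ _ hh.ne'
  rw [← mul_nonneg_iff_of_pos_right hh]
  have hid : (u0i * e + (a0 * τ - S * τ ^ 2) * (1 - e) + S * τ * h) * h
      = u0i * e * h + av * τ * (h - τ * (1 - e)) + a0 * τ * (τ - e * (h + τ)) := by
    linear_combination (τ * h - τ ^ 2 * (1 - e)) * hS
  rw [hid]
  have t1 : 0 ≤ u0i * e * h := by positivity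
  have t2 : 0 ≤ av * τ * (h - τ * (1 - e)) := mul_nonneg (mul_nonneg hav hτ.le) hc
  have t3 : 0 ≤ a0 * τ * (τ - e * (h + τ)) :=
    mul_nonneg (mul_nonneg ha0 hτ.le) (sub_nonneg.mpr hkey)
  linarith


lemma aCoef_nonneg {N : ℕ} (M : Matrix (Fin N) (Fin N) ℝ)
    (hoff : ∀ i j, j ≠ i → 0 ≤ M i j) (v : Fin N → ℝ) (hv : ∀ j, 0 ≤ v j) (i : Fin N) :
    0 ≤ aCoef M (0 : Fin N → ℝ) v i := by
  unfold aCoef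
  simp only [Pi.zero_apply, add_zero]
  exact Finset.sum_nonneg fun j hj =>
    mul_nonneg (hoff i j (Finset.ne_of_mem_erase hj)) (hv j)

lemma cnStep_nonneg {N : ℕ} (M : Matrix (Fin N) (Fin N) ℝ)
    (hoff : ∀ i j, j ≠ i → 0 ≤ M i j) (hdiag : ∀ i, M i i < 0)
    (u0 : Fin N → ℝ) (hu0 : ∀ j, 0 ≤ u0 j) (h : ℝ) (hh : 0 < h)
    (v : Fin N → ℝ) (hv : ∀ j, 0 ≤ v j) (i : Fin N) :
    0 ≤ cnStep M (0 : Fin N → ℝ) u0 h v i := by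
  unfold cnStep
  have hm := hdiag i
  have he1 : Real.exp (M i i * h) ≤ 1 :=
    (Real.exp_lt_one_iff.mpr (mul_neg_of_neg_of_pos hm hh)).le
  have t1 : 0 ≤ u0 i * Real.exp (M i i * h) :=
    mul_nonneg (hu0 i) (Real.exp_pos _).le
  have t2 : 0 ≤ (aCoef M (0 : Fin N → ℝ) v i / (-(M i i))) * (1 - Real.exp (M i i * h)) :=
    mul_nonneg (div_nonneg (aCoef_nonneg M hoff v hv i) (by linarith)) (by linarith)
  linarith

lemma lnStep_nonneg {N : ℕ} (M : Matrix (Fin N) (Fin N) ℝ)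
    (hoff : ∀ i j, j ≠ i → 0 ≤ M i j) (hdiag : ∀ i, M i i < 0)
    (u0 : Fin N → ℝ) (hu0 : ∀ j, 0 ≤ u0 j) (h : ℝ) (hh : 0 < h)
    (v : Fin N → ℝ) (hv : ∀ j, 0 ≤ v j) (i : Fin N) :
    0 ≤ lnStep M (0 : Fin N → ℝ) u0 h v i := by
  unfold lnStep sCoef
  exact ln_alg (M i i) h (u0 i) (aCoef M (0 : Fin N → ℝ) u0 i)
    (aCoef M (0 : Fin N → ℝ) v i) (hdiag i) hh (hu0 i)
    (aCoef_nonneg M hoff u0 hu0 i) (aCoef_nonneg M hoff v hv i)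

/-- Positivity preservation: under the heat-matrix assumptions with zero sources and
nonnegative initial values, all constant-neighbour values `CN_k(h)_i` (`k ≥ 1`) and
all linear-neighbour values `LN_k(h)_i` (`k ≥ 2`) are nonnegative, for every `h > 0`. -/
theorem cn_ln_positivity_preserving {N : ℕ} (hN : 1 ≤ N)
    (M : Matrix (Fin N) (Fin N) ℝ)
    (hoff : ∀ i j, j ≠ i → 0 ≤ M i j)
    (hrow : ∀ i, ∑ j, M i j = 0)
    (hdiag : ∀ i, M i i < 0)
    (u0 : Fin N → ℝ) (hu0 : ∀ j, 0 ≤ u0 j) (h : ℝ) (hh : 0 < h) :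
    (∀ k : ℕ, 1 ≤ k → ∀ i : Fin N, 0 ≤ CN M (0 : Fin N → ℝ) u0 k h i) ∧
      ∀ k : ℕ, 2 ≤ k → ∀ i : Fin N, 0 ≤ LN M (0 : Fin N → ℝ) u0 k h i := by
  have cnIter : ∀ k : ℕ, ∀ i : Fin N, 0 ≤ (cnStep M (0 : Fin N → ℝ) u0 h)^[k] u0 i := by
    intro k
    induction k with
    | zero => simpa using hu0
    | succ n ih =>
      intro i
      rw [Function.iterate_succ_apply']
      exact cnStep_nonneg M hoff hdiag u0 hu0 h hh _ ih i
  have lnIter : ∀ k : ℕ, ∀ i : Fin N,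
      0 ≤ (lnStep M (0 : Fin N → ℝ) u0 h)^[k] (cnStep M (0 : Fin N → ℝ) u0 h u0) i := by
    intro k
    induction k with
    | zero =>
      intro i
      simpa using cnStep_nonneg M hoff hdiag u0 hu0 h hh u0 hu0 i
    | succ n ih =>
      intro i
      rw [Function.iterate_succ_apply']
      exact lnStep_nonneg M hoff hdiag u0 hu0 h hh _ ih i
  exact ⟨fun k _ i => cnIter k i, fun k _ i => lnIter (k - 1) i⟩
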